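/- arXiv:1007.1998 — 3 statements merged into one kernel-verified Lean document; each statement's English description precedes it below -/
import Mathlib

section
/- Let w be a freely reduced word over the alphabet (a_1,...,a_n)^{±1} containing no occurrence of a_i^{±1}, and let u, v be disjoint subwords of w. Then the simple i-length satisfies |w|_i^simple ≥ |u|_i^simple + |v|_i^simple. -/
namespace ESPaper

/-- A letter of the free group `F_n` over the standard basis: a generator index and a sign
    (`true` = the generator, `false` = its inverse). -/
abbrev Ltr (n : ℕ) := Fin n × Bool

/-- A word over the standard basis and its inverses. -/
abbrev Wrd (n : ℕ) := List (Ltr n)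

/-- The inverse of a letter. -/
def linv {n : ℕ} (c : Ltr n) : Ltr n := (c.1, !c.2)

/-- The (formal) inverse of a word. -/
def winv {n : ℕ} (w : Wrd n) : Wrd n := w.reverse.map linv

/-- `w` is freely reduced: no two consecutive letters are inverse to each other. -/
def Reduced {n : ℕ} (w : Wrd n) : Prop := List.Chain' (fun a b => b ≠ linv a) w

/-- `w` is cyclically reduced. -/
def CyclicallyReduced {n : ℕ} (w : Wrd n) : Prop := Reduced (w ++ w)

/-- `w` contains no occurrence of `a_i^{±1}`. -/
def Avoids {n : ℕ} (i : Fin n) (w : Wrd n) : Prop := ∀ c ∈ w, c.1 ≠ i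

/-- `w` is a positive word (no inverse letters). -/
def Positive {n : ℕ} (w : Wrd n) : Prop := ∀ c ∈ w, c.2 = true

/-- Vertices of the Whitehead graph over `a ∖ {a_i}`: all letters whose index is not `i`. -/
def WVert (n : ℕ) (i : Fin n) := {c : Ltr n // c.1 ≠ i}

/-- The Whitehead graph `Γ_{a∖{a_i}}(w)`: for each pair of consecutive letters `bc` of `w`,
    an edge from `b` to `c⁻¹`. -/
def WGraph {n : ℕ} (i : Fin n) (w : Wrd n) : SimpleGraph (WVert n i) where
  Adj x y := x ≠ y ∧ ∃ p ∈ w.zip w.tail,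
    (x.1 = p.1 ∧ y.1 = linv p.2) ∨ (y.1 = p.1 ∧ x.1 = linv p.2)
  symm := ⟨by
    rintro x y ⟨hne, p, hp, h⟩
    exact ⟨hne.symm, p, hp, h.symm⟩⟩
  loopless := ⟨fun x h => h.1 rfl⟩

/-- A graph has a cut vertex `v` if it is the union of two subgraphs, each with a vertex
    other than `v`, which intersect exactly in `v`.  (A disconnected graph on at least three
    vertices automatically has a cut vertex in this sense.) -/
def HasCutVertex {V : Type*} (G : SimpleGraph V) : Prop :=
  ∃ (v : V) (H₁ H₂ : G.Subgraph),
    H₁ ⊔ H₂ = ⊤ ∧ H₁.verts ∩ H₂.verts = {v} ∧ H₁.verts ≠ {v} ∧ H₂.verts ≠ {v}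

/-- The simple `i`-length of a word `w` (containing no `a_i^{±1}`): the greatest `t` such
    that `w = w_1 ⋯ w_t` where no Whitehead graph `Γ_{a∖{a_i}}(w_j)` has a cut vertex
    (`0` if there is no such decomposition, in particular if `Γ_{a∖{a_i}}(w)` has a cut
    vertex). -/
noncomputable def simpleLen {n : ℕ} (i : Fin n) (w : Wrd n) : ℕ :=
  sSup {t | ∃ ps : List (Wrd n), ps.length = t ∧ ps.flatten = w ∧
      ∀ p ∈ ps, p ≠ [] ∧ ¬ HasCutVertex (WGraph i p)}

/-- The conjugate reduced `i`-length of `w`: the minimum over all decompositions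
    `w =_r v_1^{u_1} ⋯ v_l^{u_l}` (equality in the free group, `v^u = u⁻¹ v u`) of
    `(l - 1) + Σ_j |v_j|_i^simple`. -/
noncomputable def crLen {n : ℕ} (i : Fin n) (w : Wrd n) : ℕ :=
  sInf {k | ∃ vs us : List (Wrd n), vs ≠ [] ∧ us.length = vs.length ∧
      (∀ v ∈ vs, Reduced v ∧ Avoids i v) ∧
      FreeGroup.mk w =
        ((vs.zip us).map fun p => (FreeGroup.mk p.2)⁻¹ * FreeGroup.mk p.1 * FreeGroup.mk p.2).prod ∧
      k = (vs.length - 1) + (vs.map (simpleLen i)).sum}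

/-- One step of cyclic reduction: cancel the first against the last letter if possible. -/
def stripOnce {n : ℕ} : Wrd n → Wrd n
  | [] => []
  | a :: rest => if rest.getLast? = some (linv a) then rest.dropLast else a :: rest

/-- Cyclic reduction of a (reduced) word. -/
def cyclicReduce {n : ℕ} (w : Wrd n) : Wrd n := stripOnce^[w.length] w

/-- `u` cyclically precedes position `p` in the cyclic word `v`. -/
def CycPrec {n : ℕ} (v : Wrd n) (p : ℕ) (u : Wrd n) : Prop :=
  u <:+ (v ++ v).take (v.length + p)

/-- `u` cyclically follows position `p` in the cyclic word `v`. -/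
def CycFoll {n : ℕ} (v : Wrd n) (p : ℕ) (u : Wrd n) : Prop :=
  u <+: (v ++ v).drop (p + 1)

/-- `u` cyclically precedes every occurrence of `a_i` (and `u⁻¹` cyclically follows every
    occurrence of `a_i⁻¹`) in the cyclic reductions of the words of `Y`. -/
def IsPrecWord {n : ℕ} (i : Fin n) (Y : List (Wrd n)) (u : Wrd n) : Prop :=
  Avoids i u ∧ ∀ y ∈ Y, ∀ p < (cyclicReduce y).length,
    ((cyclicReduce y)[p]? = some (i, true) → CycPrec (cyclicReduce y) p u) ∧
    ((cyclicReduce y)[p]? = some (i, false) → CycFoll (cyclicReduce y) p (winv u))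

open scoped Classical in
/-- The word `w_L(Y)`: a longest word cyclically preceding every occurrence of `a_i`
    in the cyclic reductions of the words of `Y` (trivial if there is no longest one). -/
noncomputable def wL {n : ℕ} (i : Fin n) (Y : List (Wrd n)) : Wrd n :=
  if h : ∃ u, IsPrecWord i Y u ∧ ∀ u', IsPrecWord i Y u' → u'.length ≤ u.length
  then h.choose else []

/-- The set of cyclic positions of `v` occupied by the occurrences of a preceding word of
    length `len` around the occurrences of `a_i^{±1}`. -/
def LOcc {n : ℕ} (i : Fin n) (len : ℕ) (v : Wrd n) : Set ℕ :=
  {t | ∃ p k, p < v.length ∧ k < len ∧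
    ((v[p]? = some (i, true) ∧ t = (p + v.length - 1 - k) % v.length) ∨
     (v[p]? = some (i, false) ∧ t = (p + 1 + k) % v.length))}

/-- The set of cyclic positions of `v` occupied by the occurrences of a following word of
    length `len` around the occurrences of `a_i^{±1}`. -/
def ROcc {n : ℕ} (i : Fin n) (len : ℕ) (v : Wrd n) : Set ℕ :=
  {t | ∃ p k, p < v.length ∧ k < len ∧
    ((v[p]? = some (i, true) ∧ t = (p + 1 + k) % v.length) ∨
     (v[p]? = some (i, false) ∧ t = (p + v.length - 1 - k) % v.length))}

/-- `u` cyclically follows every occurrence of `a_i` (and `u⁻¹` precedes every `a_i⁻¹`)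
    in the cyclic reductions of the words of `Y`, with no occurrence of `u` intersecting an
    occurrence of `w_L(Y)`. -/
def IsFolWord {n : ℕ} (i : Fin n) (Y : List (Wrd n)) (u : Wrd n) : Prop :=
  Avoids i u ∧ (∀ y ∈ Y, ∀ p < (cyclicReduce y).length,
    ((cyclicReduce y)[p]? = some (i, true) → CycFoll (cyclicReduce y) p u) ∧
    ((cyclicReduce y)[p]? = some (i, false) → CycPrec (cyclicReduce y) p (winv u))) ∧
  ∀ y ∈ Y, Disjoint (LOcc i (wL i Y).length (cyclicReduce y)) (ROcc i u.length (cyclicReduce y))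

open scoped Classical in
/-- The word `w_R(Y)`. -/
noncomputable def wR {n : ℕ} (i : Fin n) (Y : List (Wrd n)) : Wrd n :=
  if h : ∃ u, IsFolWord i Y u ∧ ∀ u', IsFolWord i Y u' → u'.length ≤ u.length
  then h.choose else []

/-- The auxiliary automorphism `α'` sending `a_i` to `w_L⁻¹ a_i w_R⁻¹`. -/
noncomputable def alphaP {n : ℕ} (i : Fin n) (Y : List (Wrd n)) :
    FreeGroup (Fin n) →* FreeGroup (Fin n) :=
  FreeGroup.lift fun j => if j = i then
    (FreeGroup.mk (wL i Y))⁻¹ * FreeGroup.of i * (FreeGroup.mk (wR i Y))⁻¹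
  else FreeGroup.of j

/-- The cyclic reduction of `α'(y)` written as a reduced word. -/
noncomputable def apWord {n : ℕ} (i : Fin n) (Y : List (Wrd n)) (y : Wrd n) : Wrd n :=
  cyclicReduce (FreeGroup.toWord (alphaP i Y (FreeGroup.mk y)))

/-- In `α' Y`, every maximal power of `a_i` either occurs by itself as an element, or is
    cyclically conjugated by `u`. -/
def IsConjWord {n : ℕ} (i : Fin n) (Y : List (Wrd n)) (u : Wrd n) : Prop :=
  Avoids i u ∧ ∀ y ∈ Y,
    (∀ c ∈ apWord i Y y, c.1 = i) ∨
    ∀ p < (apWord i Y y).length,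
      (apWord i Y y)[p]?.map Prod.fst = some i →
        (((apWord i Y y)[(p + (apWord i Y y).length - 1) % (apWord i Y y).length]?.map
            Prod.fst ≠ some i → CycPrec (apWord i Y y) p (winv u)) ∧
         ((apWord i Y y)[(p + 1) % (apWord i Y y).length]?.map Prod.fst ≠ some i →
            CycFoll (apWord i Y y) p u))

open scoped Classical in
/-- The word `w_C(Y)` (trivial when every maximal power of `a_i` occurs by itself,
    since then there is no longest conjugating word). -/
noncomputable def wC {n : ℕ} (i : Fin n) (Y : List (Wrd n)) : Wrd n :=
  if h : ∃ u, IsConjWord i Y u ∧ ∀ u', IsConjWord i Y u' → u'.length ≤ u.length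
  then h.choose else []

/-- The automorphism `α_Y` sending `a_i` to `w_L⁻¹ w_C a_i w_C⁻¹ w_R⁻¹`. -/
noncomputable def alphaFG {n : ℕ} (i : Fin n) (Y : List (Wrd n)) :
    FreeGroup (Fin n) →* FreeGroup (Fin n) :=
  FreeGroup.lift fun j => if j = i then
    (FreeGroup.mk (wL i Y))⁻¹ * FreeGroup.mk (wC i Y) * FreeGroup.of i *
      (FreeGroup.mk (wC i Y))⁻¹ * (FreeGroup.mk (wR i Y))⁻¹
  else FreeGroup.of j

/-- `u` is an `i`-chunk of `g`: a maximal cyclic subword of the cyclic reduction of `g`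
    containing no `a_i^{±1}`. -/
def IsIChunk {n : ℕ} (i : Fin n) (g : FreeGroup (Fin n)) (u : Wrd n) : Prop :=
  Avoids i u ∧
    ((∃ p < (cyclicReduce g.toWord).length,
        (cyclicReduce g.toWord)[p]?.map Prod.fst = some i ∧
        u <+: (cyclicReduce g.toWord ++ cyclicReduce g.toWord).drop (p + 1) ∧
        ((cyclicReduce g.toWord ++ cyclicReduce g.toWord).drop (p + 1 + u.length)).head?.map
          Prod.fst = some i) ∨
     (Avoids i (cyclicReduce g.toWord) ∧ ∃ p ≤ (cyclicReduce g.toWord).length,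
        u = (cyclicReduce g.toWord).drop p ++ (cyclicReduce g.toWord).take p))

/-- `k(Y)`: the maximal conjugate reduced `i`-length of an `i`-chunk of `α_Y y`, `y ∈ Y`. -/
noncomputable def kLen {n : ℕ} (i : Fin n) (Y : List (Wrd n)) : ℕ :=
  sSup {c | ∃ y ∈ Y, ∃ u, IsIChunk i (alphaFG i Y (FreeGroup.mk y)) u ∧ c = crLen i u}

/-- The full `i`-length `|Y|_i = k(Y) + |w_R(Y) w_L(Y)|_i^cr` of a set of reduced words. -/
noncomputable def fullLen {n : ℕ} (i : Fin n) (Y : List (Wrd n)) : ℕ :=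
  kLen i Y + crLen i (wR i Y ++ wL i Y)

/-- `x` is an (ordered) basis of the free group: it freely generates, i.e. the induced
    endomorphism of the free group is bijective. -/
def IsBasis {n : ℕ} (x : Fin n → FreeGroup (Fin n)) : Prop :=
  Function.Bijective (FreeGroup.lift x)

/-- A basis of `F_n` given by reduced words over the standard basis. -/
def IsWordBasis {n : ℕ} (x : Fin n → Wrd n) : Prop :=
  (∀ j, Reduced (x j)) ∧ IsBasis fun j => FreeGroup.mk (x j)

/-- `(A, B)` is a free factorization of `G` into two nontrivial free factors. -/
def IsFacPair {G : Type*} [Group G] (A B : Subgroup G) : Prop :=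
  A ≠ ⊥ ∧ B ≠ ⊥ ∧ Function.Bijective (Monoid.Coprod.lift A.subtype B.subtype)

/-- `(P, Q, R)` is a free factorization of `G` into three nontrivial free factors. -/
def IsFac3 {G : Type*} [Group G] (P Q R : Subgroup G) : Prop :=
  P ≠ ⊥ ∧ Q ≠ ⊥ ∧ R ≠ ⊥ ∧
    Function.Bijective (Monoid.CoprodI.lift fun j : Fin 3 => (![P, Q, R] j).subtype)

/-- The conjugate of a subgroup. -/
def conjSub {G : Type*} [Group G] (g : G) (H : Subgroup G) : Subgroup G :=
  H.map (MulAut.conj g).toMonoidHom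

/-- Two (ordered) pairs of subgroups determine the same vertex: they agree up to
    conjugation and swapping the factors. -/
def FacRel {G : Type*} [Group G] (p q : Subgroup G × Subgroup G) : Prop :=
  ∃ g : G, (q.1 = conjSub g p.1 ∧ q.2 = conjSub g p.2) ∨
           (q.1 = conjSub g p.2 ∧ q.2 = conjSub g p.1)

/-- Vertices of the edge splitting graph: pairs of subgroups up to conjugation and swap. -/
abbrev ESV (n : ℕ) := Quot (@FacRel (FreeGroup (Fin n)) _)

/-- The vertex of the edge splitting graph represented by the pair `(A, B)`. -/
def esv {n : ℕ} (A B : Subgroup (FreeGroup (Fin n))) : ESV n := Quot.mk _ (A, B)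

/-- The factorization `p` is refined by the factorization `q` via a common refinement
    `P * Q * R` into three nontrivial free factors: `p = (P*Q, R)` and `q = (P, Q*R)`. -/
def Refines {G : Type*} [Group G] (p q : Subgroup G × Subgroup G) : Prop :=
  ∃ P Q R : Subgroup G, IsFac3 P Q R ∧ p.1 = P ⊔ Q ∧ p.2 = R ∧ q.1 = P ∧ q.2 = Q ⊔ R

/-- The edge splitting graph `ES(n)`: two distinct vertices are adjacent if they admit
    representatives with a common refinement into three nontrivial free factors. -/
def ESGraph (n : ℕ) : SimpleGraph (ESV n) where
  Adj X Y := X ≠ Y ∧ ∃ p q, Quot.mk _ p = X ∧ Quot.mk _ q = Y ∧ (Refines p q ∨ Refines q p)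
  symm := ⟨by
    rintro X Y ⟨hne, p, q, hp, hq, h⟩
    exact ⟨hne.symm, q, p, hq, hp, h.symm⟩⟩
  loopless := ⟨fun X h => h.1 rfl⟩

/-- Nested families of canceling pairs:  `Fam w gs f` holds iff `w` carries a nested family
    `F` of `f` canceling pairs whose family of (possibly empty) maximal subwords disjoint
    from the pairs is `gs`. -/
inductive Fam {n : ℕ} : Wrd n → List (Wrd n) → ℕ → Prop
  | gap (g : Wrd n) : Fam g [g] 0
  | cons (g u w rest : Wrd n) (gs₁ gs₂ : List (Wrd n)) (f₁ f₂ : ℕ) :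
      u ≠ [] → Fam w gs₁ f₁ → Fam rest gs₂ f₂ →
      Fam (g ++ u ++ w ++ winv u ++ rest) (g :: (gs₁ ++ gs₂)) (f₁ + f₂ + 1)


private lemma mem_zip_tail {α : Type*} : ∀ (w : List α) (a b : α),
    (a, b) ∈ w.zip w.tail ↔ [a, b] <:+: w := by
  intro w
  induction w with
  | nil => simp
  | cons c w ih =>
    intro a b
    cases w with
    | nil =>
      simp only [List.tail_cons, List.zip_nil_right, List.not_mem_nil, false_iff]
      intro h
      have := h.length_le
      simp at this
    | cons d w' =>
      rw [List.infix_cons_iff]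
      have hzip : (c :: d :: w').zip (c :: d :: w').tail
          = (c, d) :: (d :: w').zip (d :: w').tail := rfl
      rw [hzip, List.mem_cons, ih a b]
      constructor
      · rintro (h | h)
        · injection h with h1 h2; subst h1; subst h2
          exact Or.inl ⟨w', rfl⟩
        · exact Or.inr h
      · rintro (h | h)
        · obtain ⟨l, hl⟩ := h
          have hl' : a :: b :: l = c :: d :: w' := hl
          injection hl' with h1 hl'
          injection hl' with h2 _
          subst h1; subst h2; exact Or.inl rfl
        · exact Or.inr h

private lemma hasCut_mono {V : Type*} {G G' : SimpleGraph V} (h : G ≤ G')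
    (hc : HasCutVertex G') : HasCutVertex G := by
  obtain ⟨v, H₁, H₂, hsup, hint, h1, h2⟩ := hc
  refine ⟨v,
    ⟨H₁.verts, fun x y => H₁.Adj x y ∧ G.Adj x y, fun hxy => hxy.2,
      fun hxy => H₁.edge_vert hxy.1, ⟨fun x y hxy => ⟨hxy.1.symm, hxy.2.symm⟩⟩⟩,
    ⟨H₂.verts, fun x y => H₂.Adj x y ∧ G.Adj x y, fun hxy => hxy.2,
      fun hxy => H₂.edge_vert hxy.1, ⟨fun x y hxy => ⟨hxy.1.symm, hxy.2.symm⟩⟩⟩,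
    ?_, hint, h1, h2⟩
  have hverts : H₁.verts ∪ H₂.verts = Set.univ := by
    have := congrArg SimpleGraph.Subgraph.verts hsup
    simpa using this
  have hadj : ∀ x y, (H₁.Adj x y ∨ H₂.Adj x y) ↔ G'.Adj x y := by
    intro x y
    have := congrFun (congrFun (congrArg SimpleGraph.Subgraph.Adj hsup) x) y
    simpa using this
  ext x y
  · simpa using Set.eq_univ_iff_forall.mp hverts x
  · simp only [SimpleGraph.Subgraph.sup_adj, SimpleGraph.Subgraph.top_adj]
    constructor
    · rintro (⟨_, hg⟩ | ⟨_, hg⟩) <;> exact hg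
    · intro hg
      rcases (hadj x y).mpr (h hg) with h' | h'
      · exact Or.inl ⟨h', hg⟩
      · exact Or.inr ⟨h', hg⟩

private lemma wgraph_mono {n : ℕ} (i : Fin n) {p q : Wrd n} (h : p <:+: q) :
    WGraph i p ≤ WGraph i q := by
  intro x y hxy
  obtain ⟨hne, pr, hpr, hor⟩ : x ≠ y ∧ ∃ pr ∈ p.zip p.tail,
      (x.1 = pr.1 ∧ y.1 = linv pr.2) ∨ (y.1 = pr.1 ∧ x.1 = linv pr.2) := hxy
  show x ≠ y ∧ ∃ pr ∈ q.zip q.tail,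
      (x.1 = pr.1 ∧ y.1 = linv pr.2) ∨ (y.1 = pr.1 ∧ x.1 = linv pr.2)
  refine ⟨hne, pr, ?_, hor⟩
  rw [show pr = (pr.1, pr.2) from rfl, mem_zip_tail] at hpr ⊢
  exact hpr.trans h

private lemma nocut_of_infix {n : ℕ} (i : Fin n) {p q : Wrd n} (h : p <:+: q)
    (hp : ¬ HasCutVertex (WGraph i p)) : ¬ HasCutVertex (WGraph i q) :=
  fun hq => hp (hasCut_mono (wgraph_mono i h) hq)

private lemma extend_decomp {n : ℕ} (i : Fin n) (b : Wrd n) :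
    ∀ ps : List (Wrd n), ∀ a : Wrd n, ps ≠ [] →
    (∀ p ∈ ps, p ≠ [] ∧ ¬ HasCutVertex (WGraph i p)) →
    ∃ ps' : List (Wrd n), ps'.length = ps.length ∧
      ps'.flatten = a ++ ps.flatten ++ b ∧
      ∀ p ∈ ps', p ≠ [] ∧ ¬ HasCutVertex (WGraph i p) := by
  intro ps
  induction ps with
  | nil => intro a h; exact absurd rfl h
  | cons p rest ih =>
    intro a _ hall
    cases rest with
    | nil =>
      refine ⟨[a ++ p ++ b], rfl, by simp, ?_⟩
      intro q hq
      simp only [List.mem_singleton] at hq; subst hq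
      obtain ⟨hne, hcut⟩ := hall p (by simp)
      constructor
      · intro hcontr
        apply hne
        have := congrArg List.length hcontr
        simp only [List.length_append, List.length_nil] at this
        exact List.length_eq_zero_iff.mp (by omega)
      · exact nocut_of_infix i ⟨a, b, rfl⟩ hcut
    | cons q rest' =>
      obtain ⟨ps', hlen, hflat, hall'⟩ :=
        ih [] (by simp) (fun r hr => hall r (List.mem_cons_of_mem _ hr))
      refine ⟨(a ++ p) :: ps', by simp [hlen], ?_, ?_⟩
      · simp [hflat, List.append_assoc]
      · intro x hx
        rcases List.mem_cons.mp hx with rfl | hx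
        · obtain ⟨hne, hcut⟩ := hall p (by simp)
          constructor
          · intro hcontr
            apply hne
            have := congrArg List.length hcontr
            simp only [List.length_append, List.length_nil] at this
            exact List.length_eq_zero_iff.mp (by omega)
          · exact nocut_of_infix i ⟨a, [], by simp⟩ hcut
        · exact hall' x hx

private lemma len_le_flatten {n : ℕ} :
    ∀ ps : List (Wrd n), (∀ p ∈ ps, p ≠ []) → ps.length ≤ ps.flatten.length := by
  intro ps
  induction ps with
  | nil => simp
  | cons p rest ih =>
    intro h
    simp only [List.flatten_cons, List.length_append, List.length_cons]
    have h1 : 1 ≤ p.length := List.length_pos_iff.mpr (h p (by simp))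
    have h2 := ih (fun q hq => h q (by simp [hq]))
    omega

/-- simple `i`-length is superadditive over disjoint subwords. -/
theorem statement1 (n : ℕ) (hn : 2 < n) (i : Fin n) (w u v s t r : Wrd n)
    (hred : Reduced w) (hav : Avoids i w) (hsplit : w = s ++ u ++ t ++ v ++ r) :
    simpleLen i u + simpleLen i v ≤ simpleLen i w := by
  classical
  set S : Wrd n → Set ℕ := fun x =>
    {t | ∃ ps : List (Wrd n), ps.length = t ∧ ps.flatten = x ∧
      ∀ p ∈ ps, p ≠ [] ∧ ¬ HasCutVertex (WGraph i p)} with hSdef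
  have hsl : ∀ x, simpleLen i x = sSup (S x) := fun x => rfl
  have hbdd : ∀ x, BddAbove (S x) := by
    intro x
    refine ⟨x.length, fun c hc => ?_⟩
    obtain ⟨ps, hlen, hflat, hall⟩ := hc
    calc c = ps.length := hlen.symm
      _ ≤ ps.flatten.length := len_le_flatten ps (fun p hp => (hall p hp).1)
      _ = x.length := by rw [hflat]
  -- extension of decompositions
  have hmem : ∀ x : Wrd n, ∀ c ∈ S x, 0 < c → ∀ a b : Wrd n, c ∈ S (a ++ x ++ b) := by
    rintro x c ⟨ps, hlen, hflat, hall⟩ hpos a b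
    have hne : ps ≠ [] := by
      rintro rfl; simp at hlen; omega
    obtain ⟨ps', h1, h2, h3⟩ := extend_decomp i b ps a hne hall
    exact ⟨ps', by rw [h1, hlen], by rw [h2, hflat], h3⟩
  have hkey : ∀ c ∈ S w, c ≤ simpleLen i w := fun c hc => le_csSup (hbdd w) hc
  have hself : ∀ x : Wrd n, 0 < simpleLen i x → simpleLen i x ∈ S x := by
    intro x hx
    have hne : (S x).Nonempty := by
      by_contra h
      rw [Set.not_nonempty_iff_eq_empty] at h
      rw [hsl, h] at hx
      simp at hx
    exact (hsl x) ▸ Nat.sSup_mem hne (hbdd x)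
  rcases Nat.eq_zero_or_pos (simpleLen i u) with hu | hu
  · rcases Nat.eq_zero_or_pos (simpleLen i v) with hv | hv
    · rw [hu, hv]; exact Nat.zero_le _
    · rw [hu, zero_add]
      apply hkey
      have : w = (s ++ u ++ t) ++ v ++ r := by
        rw [hsplit]
      rw [this]
      exact hmem v _ (hself v hv) hv _ _
  · rcases Nat.eq_zero_or_pos (simpleLen i v) with hv | hv
    · rw [hv, add_zero]
      apply hkey
      have : w = s ++ u ++ (t ++ v ++ r) := by
        rw [hsplit]; simp [List.append_assoc]
      rw [this]
      exact hmem u _ (hself u hu) hu _ _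
    · apply hkey
      obtain ⟨ps₁, hl₁, hf₁, ha₁⟩ := hmem u _ (hself u hu) hu s t
      obtain ⟨ps₂, hl₂, hf₂, ha₂⟩ := hmem v _ (hself v hv) hv [] r
      refine ⟨ps₁ ++ ps₂, ?_, ?_, ?_⟩
      · simp [hl₁, hl₂]
      · rw [List.flatten_append, hf₁, hf₂, hsplit]
        simp [List.append_assoc]
      · intro p hp
        rcases List.mem_append.mp hp with hp | hp
        · exact ha₁ p hp
        · exact ha₂ p hp

end ESPaper
end

section
/- Let u and v be freely reduced words not containing a_i^{±1} such that the concatenation w = uv is freely reduced. Then |w|_i^simple ≤ |u|_i^simple + |v|_i^simple + 1. -/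
namespace ESPaper

/-- If `G ≤ G'` and `G'` has a cut vertex, then so does `G` (the vertex conditions only
    concern the vertex sets, which are shared). -/
lemma hcv_anti {V : Type*} {G G' : SimpleGraph V} (h : G ≤ G')
    (hG' : HasCutVertex G') : HasCutVertex G := by
  obtain ⟨v, H₁, H₂, hsup, hint, h1, h2⟩ := hG'
  refine ⟨v,
    ⟨H₁.verts, fun x y => H₁.Adj x y ∧ G.Adj x y, fun hxy => hxy.2,
      fun hxy => H₁.edge_vert hxy.1, ⟨fun x y hxy => ⟨hxy.1.symm, hxy.2.symm⟩⟩⟩,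
    ⟨H₂.verts, fun x y => H₂.Adj x y ∧ G.Adj x y, fun hxy => hxy.2,
      fun hxy => H₂.edge_vert hxy.1, ⟨fun x y hxy => ⟨hxy.1.symm, hxy.2.symm⟩⟩⟩,
    ?_, hint, h1, h2⟩
  have hverts : H₁.verts ∪ H₂.verts = Set.univ := by
    have := congrArg SimpleGraph.Subgraph.verts hsup
    simpa using this
  have hadj : ∀ x y, H₁.Adj x y ∨ H₂.Adj x y ↔ G'.Adj x y := by
    intro x y
    have := congrArg (fun H : SimpleGraph.Subgraph G' => H.Adj x y) hsup
    simpa using this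
  apply SimpleGraph.Subgraph.ext
  · simpa using hverts
  · ext x y
    simp only [SimpleGraph.Subgraph.sup_adj, SimpleGraph.Subgraph.top_adj]
    constructor
    · rintro (⟨-, hG⟩ | ⟨-, hG⟩) <;> exact hG
    · intro hG
      rcases (hadj x y).mpr (h hG) with h' | h'
      · exact Or.inl ⟨h', hG⟩
      · exact Or.inr ⟨h', hG⟩

lemma zt_cons {α : Type*} (a : α) (l : List α) :
    List.Sublist (l.zip l.tail) ((a :: l).zip ((a :: l).tail)) := by
  cases l with
  | nil => simp
  | cons b l' => exact List.Sublist.cons _ (List.Sublist.refl _)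

lemma zt_append_right {α : Type*} : ∀ (w s : List α),
    List.Sublist (w.zip w.tail) ((w ++ s).zip ((w ++ s).tail))
  | [], s => by simp
  | [a], s => by simp
  | a :: b :: w, s => by
      have := zt_append_right (b :: w) s
      simpa using List.Sublist.cons₂ (a, b) this

lemma zt_append_left {α : Type*} : ∀ (s w : List α),
    List.Sublist (w.zip w.tail) ((s ++ w).zip ((s ++ w).tail))
  | [], w => by simp
  | a :: s, w => ((zt_append_left s w).trans (zt_cons a (s ++ w)))

lemma wgraph_mono_right {n : ℕ} (i : Fin n) (w s : Wrd n) :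
    WGraph i w ≤ WGraph i (w ++ s) := by
  intro x y hxy
  obtain ⟨hne, p, hp, h⟩ : x ≠ y ∧ ∃ p ∈ w.zip w.tail,
      (x.1 = p.1 ∧ y.1 = linv p.2) ∨ (y.1 = p.1 ∧ x.1 = linv p.2) := hxy
  show x ≠ y ∧ ∃ p ∈ (w ++ s).zip (w ++ s).tail,
      (x.1 = p.1 ∧ y.1 = linv p.2) ∨ (y.1 = p.1 ∧ x.1 = linv p.2)
  exact ⟨hne, p, (zt_append_right w s).subset hp, h⟩

lemma wgraph_mono_left {n : ℕ} (i : Fin n) (s w : Wrd n) :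
    WGraph i w ≤ WGraph i (s ++ w) := by
  intro x y hxy
  obtain ⟨hne, p, hp, h⟩ : x ≠ y ∧ ∃ p ∈ w.zip w.tail,
      (x.1 = p.1 ∧ y.1 = linv p.2) ∨ (y.1 = p.1 ∧ x.1 = linv p.2) := hxy
  show x ≠ y ∧ ∃ p ∈ (s ++ w).zip (s ++ w).tail,
      (x.1 = p.1 ∧ y.1 = linv p.2) ∨ (y.1 = p.1 ∧ x.1 = linv p.2)
  exact ⟨hne, p, (zt_append_left s w).subset hp, h⟩

lemma flatten_length_ge {α : Type*} : ∀ (ps : List (List α)),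
    (∀ p ∈ ps, p ≠ []) → ps.length ≤ ps.flatten.length
  | [], _ => le_refl _
  | p :: ps, h => by
      simp only [List.flatten_cons, List.length_append, List.length_cons]
      have h1 : 1 ≤ p.length := List.length_pos_iff.mpr (h p (by simp))
      have h2 := flatten_length_ge ps (fun q hq => h q (by simp [hq]))
      omega

lemma le_simpleLen {n : ℕ} (i : Fin n) (w : Wrd n) (ps : List (Wrd n))
    (hf : ps.flatten = w)
    (hg : ∀ p ∈ ps, p ≠ [] ∧ ¬ HasCutVertex (WGraph i p)) :
    ps.length ≤ simpleLen i w := by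
  apply le_csSup ⟨w.length, ?_⟩ (Set.mem_setOf.mpr ⟨ps, rfl, hf, hg⟩)
  rintro t ⟨qs, rfl, hqf, hqg⟩
  calc qs.length ≤ qs.flatten.length := flatten_length_ge qs (fun p hp => (hqg p hp).1)
    _ = w.length := by rw [hqf]

lemma split_flatten {α : Type*} : ∀ (ps : List (List α)) (u v : List α),
    ps.flatten = u ++ v →
    (∃ qs rs, ps = qs ++ rs ∧ qs.flatten = u ∧ rs.flatten = v) ∨
    (∃ (qs rs : List (List α)) (s r : List α), ps = qs ++ (s ++ r) :: rs ∧ s ≠ [] ∧ r ≠ [] ∧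
      u = qs.flatten ++ s ∧ v = r ++ rs.flatten)
  | [], u, v, h => by
      left
      refine ⟨[], [], rfl, ?_, ?_⟩ <;>
        · have h' : u = [] ∧ v = [] := by
            simpa using List.append_eq_nil_iff.mp h.symm
          simp [h'.1, h'.2]
  | p :: ps, u, v, h => by
      simp only [List.flatten_cons] at h
      rcases List.append_eq_append_iff.mp h with ⟨a, ha, hf⟩ | ⟨c, hc, hv⟩
      · -- u = p ++ a, ps.flatten = a ++ v
        rcases split_flatten ps a v hf with ⟨qs, rs, hps, hq, hr⟩ |
            ⟨qs, rs, s, r, hps, hs, hrne, hq, hr⟩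
        · left
          exact ⟨p :: qs, rs, by simp [hps], by simp [hq, ha], hr⟩
        · right
          exact ⟨p :: qs, rs, s, r, by simp [hps], hs, hrne,
            by simp [ha, hq], hr⟩
      · -- p = u ++ c, v = c ++ ps.flatten
        rcases eq_or_ne c [] with rfl | hcne
        · left
          exact ⟨[p], ps, rfl, by simp [hc], by rw [hv]; simp⟩
        · rcases eq_or_ne u [] with rfl | hune
          · left
            exact ⟨[], p :: ps, rfl, rfl, by simp [hv.symm, hc]⟩
          · right
            exact ⟨[], ps, u, c, by simp [hc], hune, hcne, by simp, hv⟩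

/-- simple `i`-length is almost subadditive under concatenation. -/
theorem statement2 (n : ℕ) (hn : 2 < n) (i : Fin n) (u v : Wrd n)
    (hu : Reduced u) (hv : Reduced v) (huv : Reduced (u ++ v))
    (havu : Avoids i u) (havv : Avoids i v) :
    simpleLen i (u ++ v) ≤ simpleLen i u + simpleLen i v + 1 := by
  conv_lhs => rw [simpleLen]
  set S := {t | ∃ ps : List (Wrd n), ps.length = t ∧ ps.flatten = u ++ v ∧
      ∀ p ∈ ps, p ≠ [] ∧ ¬ HasCutVertex (WGraph i p)} with hS
  rcases S.eq_empty_or_nonempty with h | h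
  · rw [h, csSup_empty]
    exact Nat.zero_le _
  · have hbdd : BddAbove S := by
      refine ⟨(u ++ v).length, ?_⟩
      rintro t ⟨ps, rfl, hf, hg⟩
      calc ps.length ≤ ps.flatten.length :=
            flatten_length_ge ps (fun p hp => (hg p hp).1)
        _ = (u ++ v).length := by rw [hf]
    obtain ⟨ps, hlen, hflat, hgood⟩ := Nat.sSup_mem h hbdd
    rw [← hlen]
    rcases split_flatten ps u v hflat with ⟨qs, rs, hps, hq, hr⟩ |
        ⟨qs, rs, s, r, hps, hsne, hrne, hqu, hrv⟩
    · have h1 : qs.length ≤ simpleLen i u :=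
        le_simpleLen i u qs hq (fun p hp => hgood p (by simp [hps, hp]))
      have h2 : rs.length ≤ simpleLen i v :=
        le_simpleLen i v rs hr (fun p hp => hgood p (by simp [hps, hp]))
      have : ps.length = qs.length + rs.length := by simp [hps]
      omega
    · have h1 : qs.length ≤ simpleLen i u := by
        rcases List.eq_nil_or_concat qs with rfl | ⟨qs', q, rfl⟩
        · simp
        · have hq : q ∈ ps := by simp [hps]
          have hqg := hgood q hq
          have hgs : ∀ p ∈ qs' ++ [q ++ s], p ≠ [] ∧ ¬ HasCutVertex (WGraph i p) := by
            intro p hp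
            rcases List.mem_append.mp hp with hp | hp
            · exact hgood p (by simp [hps, hp])
            · rcases List.mem_singleton.mp hp with rfl
              refine ⟨by simp [hqg.1], fun hc => hqg.2 ?_⟩
              exact hcv_anti (wgraph_mono_right i q s) hc
          have := le_simpleLen i u (qs' ++ [q ++ s]) (by simp [hqu]) hgs
          simpa using this
      have h2 : rs.length ≤ simpleLen i v := by
        cases rs with
        | nil => simp
        | cons r₀ rs' =>
          have hr₀ : r₀ ∈ ps := by simp [hps]
          have hrg := hgood r₀ hr₀
          have hgs : ∀ p ∈ (r ++ r₀) :: rs', p ≠ [] ∧ ¬ HasCutVertex (WGraph i p) := by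
            intro p hp
            rcases List.mem_cons.mp hp with rfl | hp
            · refine ⟨by simp [hrne], fun hc => hrg.2 ?_⟩
              exact hcv_anti (wgraph_mono_left i r r₀) hc
            · exact hgood p (by simp [hps, hp])
          have := le_simpleLen i v ((r ++ r₀) :: rs') (by simp [hrv]) hgs
          simpa using this
      have : ps.length = qs.length + rs.length + 1 := by simp [hps]; omega
      omega

end ESPaper
end

section
/- For any freely reduced words u and v not containing a_i^{±1}, the conjugate reduced i-length satisfies |u|_i^cr − |v|_i^cr − 1 ≤ |uv|_i^cr ≤ |u|_i^cr + |v|_i^cr + 1. -/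
namespace ESPaper

lemma linv_linv {n : ℕ} (c : Ltr n) : linv (linv c) = c := by simp [linv]

lemma winv_winv {n : ℕ} (w : Wrd n) : winv (winv w) = w := by
  simp [winv, List.map_reverse, Function.comp_def, linv_linv]

lemma winv_append {n : ℕ} (a b : Wrd n) : winv (a ++ b) = winv b ++ winv a := by
  simp [winv]

lemma winv_eq_invRev {n : ℕ} (w : Wrd n) : winv w = FreeGroup.invRev w := by
  simp [winv, FreeGroup.invRev, List.map_reverse, linv]

lemma mk_winv {n : ℕ} (w : Wrd n) : FreeGroup.mk (winv w) = (FreeGroup.mk w)⁻¹ := by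
  rw [FreeGroup.inv_mk, winv_eq_invRev]

lemma reduced_winv {n : ℕ} {w : Wrd n} (h : Reduced w) : Reduced (winv w) := by
  unfold Reduced winv List.Chain' at *
  rw [List.isChain_map, List.isChain_reverse]
  refine h.imp ?_
  intro a b hab hc
  apply hab
  rw [← linv_linv b, hc, linv_linv]

lemma avoids_winv {n : ℕ} {i : Fin n} {w : Wrd n} (h : Avoids i w) : Avoids i (winv w) := by
  intro c hc
  simp only [winv, List.mem_map, List.mem_reverse] at hc
  obtain ⟨d, hd, rfl⟩ := hc
  exact h d hd


lemma mem_zip_tail_s6 {α : Type*} {l : List α} {p : α × α} :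
    p ∈ l.zip l.tail ↔ ∃ k, l[k]? = some p.1 ∧ l[k + 1]? = some p.2 := by
  rw [List.mem_iff_getElem?]
  constructor
  · rintro ⟨k, hk⟩
    rw [List.getElem?_zip_eq_some] at hk
    exact ⟨k, hk.1, by rw [← List.getElem?_tail]; exact hk.2⟩
  · rintro ⟨k, h1, h2⟩
    exact ⟨k, List.getElem?_zip_eq_some.2 ⟨h1, by rw [List.getElem?_tail]; exact h2⟩⟩

lemma getElem?_winv {n : ℕ} (w : Wrd n) (k : ℕ) (hk : k < w.length) :
    (winv w)[k]? = (w[w.length - 1 - k]?).map linv := by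
  unfold winv
  rw [List.getElem?_map, List.getElem?_reverse (by simpa using hk)]

lemma mem_zip_tail_winv_mp {n : ℕ} {w : Wrd n} {p : Ltr n × Ltr n}
    (h : p ∈ (winv w).zip (winv w).tail) : (linv p.2, linv p.1) ∈ w.zip w.tail := by
  rw [mem_zip_tail_s6] at h ⊢
  obtain ⟨k, h1, h2⟩ := h
  have hlen : (winv w).length = w.length := by simp [winv]
  have hk1 : k + 1 < w.length := by
    by_contra hc
    rw [List.getElem?_eq_none (by omega : (winv w).length ≤ k + 1)] at h2
    cases h2
  rw [getElem?_winv w k (by omega)] at h1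
  rw [getElem?_winv w (k + 1) (by omega)] at h2
  refine ⟨w.length - 1 - (k + 1), ?_, ?_⟩
  · simp only [Option.map_eq_some_iff] at h2
    obtain ⟨d, hd, he⟩ := h2
    rw [← he, linv_linv] at *
    exact hd
  · have : w.length - 1 - (k + 1) + 1 = w.length - 1 - k := by omega
    rw [this]
    simp only [Option.map_eq_some_iff] at h1
    obtain ⟨d, hd, he⟩ := h1
    rw [← he, linv_linv] at *
    exact hd

lemma mem_zip_tail_winv {n : ℕ} {w : Wrd n} {p : Ltr n × Ltr n} :
    p ∈ (winv w).zip (winv w).tail ↔ (linv p.2, linv p.1) ∈ w.zip w.tail := by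
  constructor
  · exact mem_zip_tail_winv_mp
  · intro h
    have := mem_zip_tail_winv_mp (w := winv w) (p := (linv p.2, linv p.1))
    rw [winv_winv] at this
    simpa [linv_linv] using this h

lemma wgraph_winv {n : ℕ} (i : Fin n) (w : Wrd n) : WGraph i (winv w) = WGraph i w := by
  ext x y
  unfold WGraph
  constructor
  · rintro ⟨hne, p, hp, h⟩
    refine ⟨hne, (linv p.2, linv p.1), mem_zip_tail_winv.1 hp, ?_⟩
    rcases h with ⟨h1, h2⟩ | ⟨h1, h2⟩
    · exact Or.inr ⟨h2, by rw [h1, linv_linv]⟩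
    · exact Or.inl ⟨h2, by rw [h1, linv_linv]⟩
  · rintro ⟨hne, q, hq, h⟩
    refine ⟨hne, (linv q.2, linv q.1), ?_, ?_⟩
    · rw [mem_zip_tail_winv]; simpa [linv_linv] using hq
    · rcases h with ⟨h1, h2⟩ | ⟨h1, h2⟩
      · exact Or.inr ⟨h2, by rw [h1]; exact (linv_linv q.1).symm⟩
      · exact Or.inl ⟨h2, by rw [h1]; exact (linv_linv q.1).symm⟩

lemma flatten_winv {n : ℕ} (ps : List (Wrd n)) :
    (ps.reverse.map winv).flatten = winv ps.flatten := by
  induction ps with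
  | nil => simp [winv]
  | cons a ps ih =>
    rw [List.reverse_cons, List.map_append, List.flatten_append, ih]
    simp [winv_append]

lemma winv_ne_nil {n : ℕ} {w : Wrd n} (h : w ≠ []) : winv w ≠ [] := by
  simp [winv]; exact h

/-- The defining set of `simpleLen`. -/
def simpleSet {n : ℕ} (i : Fin n) (w : Wrd n) : Set ℕ :=
  {t | ∃ ps : List (Wrd n), ps.length = t ∧ ps.flatten = w ∧
      ∀ p ∈ ps, p ≠ [] ∧ ¬ HasCutVertex (WGraph i p)}

lemma simpleSet_subset_winv {n : ℕ} (i : Fin n) (w : Wrd n) :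
    simpleSet i w ⊆ simpleSet i (winv w) := by
  rintro t ⟨ps, hlen, hflat, hps⟩
  refine ⟨ps.reverse.map winv, by simp [hlen], by rw [flatten_winv, hflat], ?_⟩
  rintro p hp
  simp only [List.mem_map, List.mem_reverse] at hp
  obtain ⟨q, hq, rfl⟩ := hp
  exact ⟨winv_ne_nil (hps q hq).1, by rw [wgraph_winv]; exact (hps q hq).2⟩

lemma simpleLen_winv {n : ℕ} (i : Fin n) (w : Wrd n) :
    simpleLen i (winv w) = simpleLen i w := by
  have h1 := simpleSet_subset_winv i w
  have h2 := simpleSet_subset_winv i (winv w)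
  rw [winv_winv] at h2
  have : simpleSet i (winv w) = simpleSet i w := le_antisymm h2 h1
  show sSup (simpleSet i (winv w)) = sSup (simpleSet i w)
  rw [this]

/-- The defining set of `crLen`. -/
def crSet {n : ℕ} (i : Fin n) (w : Wrd n) : Set ℕ :=
  {k | ∃ vs us : List (Wrd n), vs ≠ [] ∧ us.length = vs.length ∧
      (∀ v ∈ vs, Reduced v ∧ Avoids i v) ∧
      FreeGroup.mk w =
        ((vs.zip us).map fun p => (FreeGroup.mk p.2)⁻¹ * FreeGroup.mk p.1 * FreeGroup.mk p.2).prod ∧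
      k = (vs.length - 1) + (vs.map (simpleLen i)).sum}

lemma crLen_eq {n : ℕ} (i : Fin n) (w : Wrd n) : crLen i w = sInf (crSet i w) := rfl

lemma mem_crSet_self {n : ℕ} {i : Fin n} {w : Wrd n} (hred : Reduced w) (hav : Avoids i w) :
    simpleLen i w ∈ crSet i w := by
  refine ⟨[w], [[]], by simp, by simp, by simpa using ⟨hred, hav⟩, ?_, by simp⟩
  simp [← FreeGroup.one_eq_mk]

lemma mem_crSet_winv {n : ℕ} {i : Fin n} {w : Wrd n} {k : ℕ} (hk : k ∈ crSet i w) :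
    k ∈ crSet i (winv w) := by
  obtain ⟨vs, us, hne, hlen, hred, hprod, hkval⟩ := hk
  refine ⟨vs.reverse.map winv, us.reverse, by simp [hne], by simp [hlen], ?_, ?_, ?_⟩
  · rintro v hv
    simp only [List.mem_map, List.mem_reverse] at hv
    obtain ⟨q, hq, rfl⟩ := hv
    exact ⟨reduced_winv (hred q hq).1, avoids_winv (hred q hq).2⟩
  · have hzip : (vs.reverse.map winv).zip us.reverse
        = ((vs.zip us).map fun p => (winv p.1, p.2)).reverse := by
      rw [List.zip_map_left]
      have : vs.reverse.zip us.reverse = (vs.zip us).reverse := by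
        clear hprod hkval hred hne
        induction vs generalizing us with
        | nil => simp
        | cons a vs ih =>
          cases us with
          | nil => simp at hlen
          | cons b us =>
            simp only [List.length_cons, Nat.succ.injEq] at hlen
            simp only [List.reverse_cons, List.zip_cons_cons]
            rw [List.zip_append (by simp [hlen]), ih us hlen]
            simp
      rw [this, List.map_reverse]
      rfl
    rw [mk_winv, hprod, hzip, List.map_reverse, List.map_map, List.prod_inv_reverse,
      List.map_map]
    congr 2
    apply List.map_congr_left
    rintro ⟨a, b⟩ _
    show ((FreeGroup.mk b)⁻¹ * FreeGroup.mk a * FreeGroup.mk b)⁻¹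
      = (FreeGroup.mk b)⁻¹ * FreeGroup.mk (winv a) * FreeGroup.mk b
    rw [mk_winv]
    group
  · have : (vs.reverse.map winv).map (simpleLen i) = (vs.map (simpleLen i)).reverse := by
      rw [List.map_map, ← List.map_reverse]
      apply List.map_congr_left
      intro a _
      exact simpleLen_winv i a
    have hL : (List.map winv vs.reverse).length = vs.length := by simp
    rw [hkval, hL, this, List.sum_reverse]

lemma mem_crSet_combine {n : ℕ} {i : Fin n} {w₁ w₂ w₃ : Wrd n} {k₁ k₂ : ℕ}
    (h3 : FreeGroup.mk w₃ = FreeGroup.mk w₁ * FreeGroup.mk w₂)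
    (h1 : k₁ ∈ crSet i w₁) (h2 : k₂ ∈ crSet i w₂) : k₁ + k₂ + 1 ∈ crSet i w₃ := by
  obtain ⟨vs₁, us₁, hne₁, hlen₁, hred₁, hp₁, hk₁⟩ := h1
  obtain ⟨vs₂, us₂, hne₂, hlen₂, hred₂, hp₂, hk₂⟩ := h2
  refine ⟨vs₁ ++ vs₂, us₁ ++ us₂, by simp [hne₁], by simp [hlen₁, hlen₂], ?_, ?_, ?_⟩
  · intro x hx
    rcases List.mem_append.1 hx with hx | hx
    · exact hred₁ x hx
    · exact hred₂ x hx
  · rw [h3, hp₁, hp₂, List.zip_append hlen₁.symm, List.map_append, List.prod_append]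
  · have l1 : 1 ≤ vs₁.length := List.length_pos_iff.2 hne₁
    have l2 : 1 ≤ vs₂.length := List.length_pos_iff.2 hne₂
    simp only [List.length_append, List.map_append, List.sum_append]
    omega

/-- conjugate reduced `i`-length under multiplication. -/
theorem statement6 (n : ℕ) (hn : 2 < n) (i : Fin n) (u v : Wrd n)
    (hu : Reduced u) (hv : Reduced v) (havu : Avoids i u) (havv : Avoids i v) :
    (crLen i u : ℤ) - crLen i v - 1 ≤ crLen i (u ++ v) ∧
      (crLen i (u ++ v) : ℤ) ≤ crLen i u + crLen i v + 1 := by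
  have neU : (crSet i u).Nonempty := ⟨_, mem_crSet_self hu havu⟩
  have neV : (crSet i v).Nonempty := ⟨_, mem_crSet_self hv havv⟩
  have hUV3 : FreeGroup.mk (u ++ v) = FreeGroup.mk u * FreeGroup.mk v := FreeGroup.mul_mk.symm
  have neUV : (crSet i (u ++ v)).Nonempty :=
    ⟨_, mem_crSet_combine hUV3 (mem_crSet_self hu havu) (mem_crSet_self hv havv)⟩
  have neW : (crSet i (winv v)).Nonempty := ⟨_, mem_crSet_winv (mem_crSet_self hv havv)⟩
  have h_upper : crLen i (u ++ v) ≤ crLen i u + crLen i v + 1 := by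
    rw [crLen_eq]
    exact Nat.sInf_le (mem_crSet_combine hUV3 (Nat.sInf_mem neU) (Nat.sInf_mem neV))
  have hWle : crLen i (winv v) ≤ crLen i v := by
    rw [crLen_eq]
    exact Nat.sInf_le (mem_crSet_winv (Nat.sInf_mem neV))
  have hU3 : FreeGroup.mk u = FreeGroup.mk (u ++ v) * FreeGroup.mk (winv v) := by
    rw [mk_winv, ← FreeGroup.mul_mk]
    group
  have h_lower : crLen i u ≤ crLen i (u ++ v) + crLen i (winv v) + 1 := by
    rw [crLen_eq]
    exact Nat.sInf_le (mem_crSet_combine hU3 (Nat.sInf_mem neUV) (Nat.sInf_mem neW))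
  constructor <;> omega

end ESPaper
end
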